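/- The five products of Vandermonde determinants d_1 = Δ_{123}Δ_{456}, d_2 = Δ_{124}Δ_{356}, d_3 = Δ_{125}Δ_{346}, d_4 = Δ_{134}Δ_{256}, d_5 = Δ_{135}Δ_{246} satisfy the quartic identity (d_1(d_1 - d_2 + d_3 + d_4 - d_5) + d_2 d_5 + d_3 d_4)^2 - 4 d_2 d_3 d_4 d_5 = 0. -/
import Mathlib


/-- The Vandermonde determinant `Δ_{pqr} = (x_q - x_p)(x_r - x_p)(x_r - x_q)`. -/
def Dlt {R : Type*} [CommRing R] (p q r : R) : R := (q - p) * (r - p) * (r - q)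

private lemma quartic_core {R : Type*} [CommRing R] (A p P : R)
    (hA : A = 2 * P) (hP : p = P * P) : A ^ 2 - 4 * p = 0 := by
  subst hA hP; ring

set_option maxHeartbeats 1000000 in
private lemma auxA {R : Type*} [CommRing R] (y2 y3 y4 y5 y6 : R) :
    ((y2 * y3 * (y3 - y2)) * ((y5 - y4) * (y6 - y4) * (y6 - y5))) * (((y2 * y3 * (y3 - y2)) * ((y5 - y4) * (y6 - y4) * (y6 - y5))) - ((y2 * y4 * (y4 - y2)) * ((y5 - y3) * (y6 - y3) * (y6 - y5))) + ((y2 * y5 * (y5 - y2)) * ((y4 - y3) * (y6 - y3) * (y6 - y4))) + ((y3 * y4 * (y4 - y3)) * ((y5 - y2) * (y6 - y2) * (y6 - y5))) - ((y3 * y5 * (y5 - y3)) * ((y4 - y2) * (y6 - y2) * (y6 - y4)))) + ((y2 * y4 * (y4 - y2)) * ((y5 - y3) * (y6 - y3) * (y6 - y5))) * ((y3 * y5 * (y5 - y3)) * ((y4 - y2) * (y6 - y2) * (y6 - y4))) + ((y2 * y5 * (y5 - y2)) * ((y4 - y3) * (y6 - y3) * (y6 - y4))) * ((y3 * y4 *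 (y4 - y3)) * ((y5 - y2) * (y6 - y2) * (y6 - y5)))
      = 2 * (y2 * y4 * (y4 - y2) * (y5 - y3) * (y6 - y3) * (y6 - y5) * y5 * (y5 - y2) * (y4 - y3) * (y6 - y4) * y3 * (y6 - y2)) := by
  ring

private lemma auxP {R : Type*} [CommRing R]
    (a21 a31 a41 a42 a43 a51 a52 a53 a62 a63 a64 a65 : R) :
    ((a21 * a41 * a42) * (a53 * a63 * a65)) * ((a21 * a51 * a52) * (a43 * a63 * a64)) * ((a31 * a41 * a43) * (a52 * a62 * a65)) * ((a31 * a51 * a53) * (a42 * a62 * a64)) = (a21 * a41 * a42 * a53 * a63 * a65 * a51 * a52 * a43 * a64 * a31 * a62) * (a21 * a41 * a42 * a53 * a63 * a65 * a51 * a52 * a43 * a64 * a31 * a62) := by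
  ring

/-- The quartic identity satisfied by the five products of Vandermonde determinants. -/
theorem quartic_relation {R : Type*} [CommRing R] (x1 x2 x3 x4 x5 x6 : R) :
    let d1 := Dlt x1 x2 x3 * Dlt x4 x5 x6
    let d2 := Dlt x1 x2 x4 * Dlt x3 x5 x6
    let d3 := Dlt x1 x2 x5 * Dlt x3 x4 x6
    let d4 := Dlt x1 x3 x4 * Dlt x2 x5 x6
    let d5 := Dlt x1 x3 x5 * Dlt x2 x4 x6
    (d1 * (d1 - d2 + d3 + d4 - d5) + d2 * d5 + d3 * d4) ^ 2 - 4 * (d2 * d3 * d4 * d5) = 0 := by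
  intro d1 d2 d3 d4 d5
  have hA := auxA (x2 - x1) (x3 - x1) (x4 - x1) (x5 - x1) (x6 - x1)
  simp only [sub_sub_sub_cancel_right] at hA
  have hP := auxP (x2 - x1) (x3 - x1) (x4 - x1) (x4 - x2) (x4 - x3) (x5 - x1) (x5 - x2)
      (x5 - x3) (x6 - x2) (x6 - x3) (x6 - x4) (x6 - x5)
  show ((((x2 - x1) * (x3 - x1) * (x3 - x2)) * ((x5 - x4) * (x6 - x4) * (x6 - x5))) * ((((x2 - x1) * (x3 - x1) * (x3 - x2)) * ((x5 - x4) * (x6 - x4) * (x6 - x5))) - (((x2 - x1) * (x4 - x1) * (x4 - x2)) * ((x5 - x3) * (x6 - x3) * (x6 - x5))) + (((x2 - x1) * (x5 - x1) * (x5 - x2)) * ((x4 - x3) * (x6 - x3) * (x6 - x4))) + (((x3 - x1) * (x4 - x1) * (x4 - x3)) * ((x5 - x2) * (x6 - x2) * (x6 - x5))) - (((x3 - x1) * (x5 - x1) * (x5 - x3)) * ((x4 - x2) * (x6 - x2) * (x6 - x4)))) + (((x2 - x1) * (x4 - x1) * (x4 - x2)) * ((x5 - x3) * (x6 - x3) *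 (x6 - x5))) * (((x3 - x1) * (x5 - x1) * (x5 - x3)) * ((x4 - x2) * (x6 - x2) * (x6 - x4))) + (((x2 - x1) * (x5 - x1) * (x5 - x2)) * ((x4 - x3) * (x6 - x3) * (x6 - x4))) * (((x3 - x1) * (x4 - x1) * (x4 - x3)) * ((x5 - x2) * (x6 - x2) * (x6 - x5)))) ^ 2
      - 4 * ((((x2 - x1) * (x4 - x1) * (x4 - x2)) * ((x5 - x3) * (x6 - x3) * (x6 - x5))) * (((x2 - x1) * (x5 - x1) * (x5 - x2)) * ((x4 - x3) * (x6 - x3) * (x6 - x4))) * (((x3 - x1) * (x4 - x1) * (x4 - x3)) * ((x5 - x2) * (x6 - x2) * (x6 - x5))) * (((x3 - x1) * (x5 - x1) * (x5 - x3)) * ((x4 - x2) * (x6 - x2) * (x6 - x4)))) = 0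
  exact quartic_core _ _ _ hA hP
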